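/- Let G be a connected graph of order n, minimum degree δ and maximum degree Δ. If Δ > n/2 − 1, then the proximity satisfies π(G) ≤ 3(n−Δ)²/(2(n−1)(δ+1)) + 13/2. -/

import Mathlib

open Finset SimpleGraph

lemma prox_aux_prefix {V : Type*} {G : SimpleGraph V} (hG : G.Connected) :
    ∀ {a b : V} (p : G.Walk a b) (i : ℕ), G.dist a (p.getVert i) ≤ i := by
  intro a b p
  induction p with
  | nil => intro i; simp [SimpleGraph.Walk.getVert_of_length_le, SimpleGraph.dist_self]
  | @cons a c b h q ih =>
    intro i
    cases i with
    | zero => simp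
    | succ i =>
      rw [SimpleGraph.Walk.getVert_cons_succ]
      calc G.dist a (q.getVert i) ≤ G.dist a c + G.dist c (q.getVert i) :=
            hG.dist_triangle
        _ ≤ i + 1 := by
            have : G.dist a c = 1 := (SimpleGraph.dist_eq_one_iff_adj).mpr h
            have := ih i
            omega

lemma prox_aux_exists {V : Type*} {G : SimpleGraph V} (hG : G.Connected) (v u : V)
    {t : ℕ} (ht : t ≤ G.dist v u) : ∃ w : V, G.dist v w = t := by
  obtain ⟨p, hp⟩ := hG.exists_walk_length_eq_dist v u
  refine ⟨p.getVert t, le_antisymm (prox_aux_prefix hG p t) ?_⟩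
  have h1 : G.dist u (p.reverse.getVert (p.length - t)) ≤ p.length - t :=
    prox_aux_prefix hG p.reverse (p.length - t)
  rw [SimpleGraph.Walk.getVert_reverse] at h1
  have h2 : p.length - (p.length - t) = t := by omega
  rw [h2] at h1
  have h3 : G.dist v u ≤ G.dist v (p.getVert t) + G.dist (p.getVert t) u :=
    hG.dist_triangle
  have hcomm : G.dist (p.getVert t) u = G.dist u (p.getVert t) :=
    SimpleGraph.dist_comm
  omega

open Finset in
lemma prox_aux_count {V : Type*} [Fintype V] [DecidableEq V] (G : SimpleGraph V)
    [DecidableRel G.Adj] (hG : G.Connected) (v : V) (k : ℕ) (hk : 1 ≤ k)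
    (hB : 1 ≤ (univ.filter (fun u => 3*k ≤ G.dist v u + 1)).card) :
    G.degree v + 1 + (univ.filter (fun u => 3*k ≤ G.dist v u + 1)).card
      + (k-1) * (G.minDegree + 1) ≤ Fintype.card V := by
  classical
  obtain ⟨u0, hu0⟩ := Finset.card_pos.mp hB
  rw [Finset.mem_filter] at hu0
  have hu0d : 3*k ≤ G.dist v u0 + 1 := hu0.2
  -- choose vertices at distance 3j
  have hw' : ∀ j : ℕ, ∃ w : V, (1 ≤ j ∧ j ≤ k-1) → G.dist v w = 3*j := by
    intro j
    by_cases hj : 1 ≤ j ∧ j ≤ k-1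
    · obtain ⟨w, hw⟩ := prox_aux_exists hG v u0 (t := 3*j) (by omega)
      exact ⟨w, fun _ => hw⟩
    · exact ⟨v, fun h => absurd h hj⟩
  choose w hw using hw'
  set F : ℕ → Finset V := fun j => insert (w j) (G.neighborFinset (w j)) with hF
  have hFdist : ∀ j, 1 ≤ j → j ≤ k-1 → ∀ x ∈ F j,
      3*j ≤ G.dist v x + 1 ∧ G.dist v x ≤ 3*j + 1 := by
    intro j hj1 hj2 x hx
    have hwj : G.dist v (w j) = 3*j := hw j ⟨hj1, hj2⟩
    rcases Finset.mem_insert.mp hx with rfl | hx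
    · omega
    · have hadj : G.Adj (w j) x := by rwa [SimpleGraph.mem_neighborFinset] at hx
      have h1 : G.dist (w j) x = 1 := SimpleGraph.dist_eq_one_iff_adj.mpr hadj
      have t1 : G.dist v x ≤ G.dist v (w j) + G.dist (w j) x := hG.dist_triangle
      have t2 : G.dist v (w j) ≤ G.dist v x + G.dist x (w j) := hG.dist_triangle
      have hcomm : G.dist x (w j) = G.dist (w j) x := SimpleGraph.dist_comm
      omega
  set S : Finset V := univ.filter (fun u => 2 ≤ G.dist v u) with hS
  set T : Finset V := univ.filter (fun u => 3*k ≤ G.dist v u + 1) with hT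
  set U : Finset V := (Icc 1 (k-1)).biUnion F with hU
  have hUS : U ⊆ S := by
    intro x hx
    rw [hU, Finset.mem_biUnion] at hx
    obtain ⟨j, hj, hxF⟩ := hx
    rw [Finset.mem_Icc] at hj
    have := hFdist j hj.1 hj.2 x hxF
    rw [hS, Finset.mem_filter]
    exact ⟨Finset.mem_univ _, by omega⟩
  have hTS : T ⊆ S := by
    intro x hx
    rw [hT, Finset.mem_filter] at hx
    rw [hS, Finset.mem_filter]
    exact ⟨Finset.mem_univ _, by omega⟩
  have hUT : Disjoint U T := by
    rw [Finset.disjoint_left]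
    intro x hx hxT
    rw [hU, Finset.mem_biUnion] at hx
    obtain ⟨j, hj, hxF⟩ := hx
    rw [Finset.mem_Icc] at hj
    have h1 := hFdist j hj.1 hj.2 x hxF
    rw [hT, Finset.mem_filter] at hxT
    have := hxT.2
    omega
  have hUcard : (k-1) * (G.minDegree + 1) ≤ U.card := by
    rw [hU, Finset.card_biUnion]
    · calc (k-1) * (G.minDegree + 1)
          = ∑ _j ∈ Icc 1 (k-1), (G.minDegree + 1) := by
            rw [Finset.sum_const, smul_eq_mul, Nat.card_Icc]
            simp
        _ ≤ ∑ j ∈ Icc 1 (k-1), (F j).card := by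
            apply Finset.sum_le_sum
            intro j _
            have hcard : (F j).card = G.degree (w j) + 1 := by
              rw [hF]
              simp only []
              rw [Finset.card_insert_of_notMem (SimpleGraph.notMem_neighborFinset_self G _),
                SimpleGraph.card_neighborFinset_eq_degree]
            rw [hcard]
            have := G.minDegree_le_degree (w j)
            omega
    · intro a ha b hb hab
      rw [Finset.mem_coe, Finset.mem_Icc] at ha hb
      rw [Function.onFun, Finset.disjoint_left]
      intro x hxa hxb
      have h1 := hFdist a ha.1 ha.2 x hxa
      have h2 := hFdist b hb.1 hb.2 x hxb
      omega
  have hScard : S.card + (G.degree v + 1) = Fintype.card V := by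
    have hcompl : univ.filter (fun u => ¬ 2 ≤ G.dist v u)
        = insert v (G.neighborFinset v) := by
      ext x
      simp only [Finset.mem_filter, Finset.mem_univ, true_and, Finset.mem_insert,
        SimpleGraph.mem_neighborFinset, not_le]
      constructor
      · intro hx
        interval_cases h : G.dist v x
        · left; exact (hG.dist_eq_zero_iff.mp h).symm
        · right; exact SimpleGraph.dist_eq_one_iff_adj.mp h
      · rintro (rfl | hadj)
        · simp [SimpleGraph.dist_self]
        · rw [SimpleGraph.dist_eq_one_iff_adj.mpr hadj]; omega
    have hc2 : (insert v (G.neighborFinset v)).card = G.degree v + 1 := by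
      rw [Finset.card_insert_of_notMem (SimpleGraph.notMem_neighborFinset_self G _),
        SimpleGraph.card_neighborFinset_eq_degree]
    rw [hS, ← hc2, ← hcompl]
    rw [Finset.card_filter_add_card_filter_not, Finset.card_univ]
  have hunion : U.card + T.card ≤ S.card := by
    rw [← Finset.card_union_of_disjoint hUT]
    exact Finset.card_le_card (Finset.union_subset hUS hTS)
  omega

lemma prox_aux_ptwise (M q t : ℝ) (hq0 : 0 < q) :
    max 0 (M - t) ≤ ((max 0 (M + q/2 - t))^2 - (max 0 (M + q/2 - t - q))^2)/(2*q) := by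
  set a := max 0 (M + q/2 - t) with ha
  set b := max 0 (M + q/2 - t - q) with hb
  have ha0 : 0 ≤ a := le_max_left _ _
  have hb0 : 0 ≤ b := le_max_left _ _
  have hba : b ≤ a := max_le_max le_rfl (by linarith)
  rw [le_div_iff₀ (by linarith : (0:ℝ) < 2*q)]
  rcases le_or_gt (M - t) 0 with hle | hgt
  · rw [max_eq_left hle]; nlinarith
  · rw [max_eq_right hgt.le]
    have haval : a = M + q/2 - t := max_eq_right (by linarith)
    rcases le_or_gt (M + q/2 - t - q) 0 with h1 | h1
    · have hbval : b = 0 := max_eq_left h1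
      nlinarith [sq_nonneg (a - q)]
    · have hbval : b = M + q/2 - t - q := max_eq_right h1.le
      nlinarith

lemma prox_aux_tele (M q : ℝ) (hM0 : 0 ≤ M) (hq0 : 0 < q) (N : ℕ) :
    ∑ j ∈ Finset.range N, max 0 (M - (j:ℝ)*q) ≤ (M + q/2)^2/(2*q) := by
  have h2q : (0:ℝ) < 2*q := by linarith
  calc ∑ j ∈ Finset.range N, max 0 (M - (j:ℝ)*q)
      ≤ ∑ j ∈ Finset.range N,
          ((max 0 (M + q/2 - (j:ℝ)*q))^2 - (max 0 (M + q/2 - ((j+1:ℕ):ℝ)*q))^2)/(2*q) := by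
        apply Finset.sum_le_sum
        intro j _
        have h := prox_aux_ptwise M q ((j:ℝ)*q) hq0
        have heq : M + q/2 - ((j+1:ℕ):ℝ)*q = M + q/2 - (j:ℝ)*q - q := by
          push_cast; ring
        rw [heq]
        exact h
    _ = (∑ j ∈ Finset.range N,
          ((fun i : ℕ => (max 0 (M + q/2 - (i:ℝ)*q))^2) j
            - (fun i : ℕ => (max 0 (M + q/2 - (i:ℝ)*q))^2) (j+1))) / (2*q) := by
        rw [Finset.sum_div]
    _ = ((max 0 (M + q/2 - ((0:ℕ):ℝ)*q))^2 - (max 0 (M + q/2 - (N:ℝ)*q))^2)/(2*q) := by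
        rw [Finset.sum_range_sub' (fun i : ℕ => (max 0 (M + q/2 - (i:ℝ)*q))^2)]
    _ ≤ (max 0 (M + q/2 - ((0:ℕ):ℝ)*q))^2/(2*q) := by
        gcongr ?_ / _
        nlinarith [le_max_left (0:ℝ) (M + q/2 - (N:ℝ)*q)]
    _ = (M + q/2)^2/(2*q) := by
        norm_num
        congr 1
        rw [max_eq_right (by linarith)]

set_option maxHeartbeats 2000000 in
theorem proximity_bound_large_maxDegree {V : Type*} [Fintype V] [Nonempty V]
    [DecidableEq V] (G : SimpleGraph V) [DecidableRel G.Adj] (hG : G.Connected)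
    (n δ Δ : ℕ) (hn : Fintype.card V = n)
    (hδ : G.minDegree = δ) (hΔ : G.maxDegree = Δ)
    (hbig : (Δ : ℝ) > (n : ℝ) / 2 - 1) :
    Finset.univ.inf' Finset.univ_nonempty
        (fun v => (∑ u, (G.dist v u : ℝ)) / (n - 1)) ≤
      3 * ((n : ℝ) - Δ) ^ 2 / (2 * ((n : ℝ) - 1) * ((δ : ℝ) + 1)) + 13 / 2 := by
  classical
  obtain ⟨v, hvdeg⟩ := G.exists_maximal_degree_vertex
  have hinf : Finset.univ.inf' Finset.univ_nonempty
      (fun v => (∑ u, (G.dist v u : ℝ)) / (n - 1)) ≤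
      (∑ u, (G.dist v u : ℝ)) / ((n:ℝ) - 1) :=
    Finset.inf'_le (fun v => (∑ u, (G.dist v u : ℝ)) / ((n:ℝ) - 1)) (Finset.mem_univ v)
  have hn1 : 1 ≤ n := by rw [← hn]; exact Fintype.card_pos
  rcases eq_or_lt_of_le hn1 with hn1' | hn2
  · -- n = 1
    have hone : (n:ℝ) = 1 := by exact_mod_cast hn1'.symm
    have h0 : (∑ u, (G.dist v u : ℝ)) / ((n:ℝ) - 1) = 0 := by
      rw [hone]; simp
    have hr : 2 * ((n : ℝ) - 1) * ((δ : ℝ) + 1) = 0 := by rw [hone]; ring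
    rw [hr]
    refine le_trans hinf ?_
    rw [h0]
    norm_num
  -- n ≥ 2
  have hΔv : G.degree v = Δ := by rw [← hΔ, hvdeg]
  have hΔn : Δ < n := by rw [← hΔv, ← hn]; exact G.degree_lt_card_verts v
  have hδn : δ < n := by
    rw [← hδ, ← hn]
    exact lt_of_le_of_lt (G.minDegree_le_degree v) (G.degree_lt_card_verts v)
  -- Step 1: pointwise bound
  have step1 : ∀ u : V, G.dist v u ≤
      1 + 3 * ((Finset.Icc 1 n).filter (fun k => 3*k ≤ G.dist v u + 1)).card := by
    intro u
    have hdlt : G.dist v u < n := by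
      obtain ⟨p, hp, hlen⟩ := hG.exists_path_of_dist v u
      rw [← hlen, ← hn]
      exact hp.length_lt
    have hfil : (Finset.Icc 1 n).filter (fun k => 3*k ≤ G.dist v u + 1)
        = Finset.Icc 1 ((G.dist v u + 1)/3) := by
      ext k
      simp only [Finset.mem_filter, Finset.mem_Icc]
      omega
    rw [hfil, Nat.card_Icc]
    omega
  -- Step 2: double counting
  have step2 : ∑ u, G.dist v u ≤
      n + 3 * ∑ k ∈ Finset.Icc 1 n,
        (Finset.univ.filter (fun u => 3*k ≤ G.dist v u + 1)).card := by
    calc ∑ u, G.dist v u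
        ≤ ∑ u : V, (1 + 3 * ((Finset.Icc 1 n).filter
            (fun k => 3*k ≤ G.dist v u + 1)).card) := Finset.sum_le_sum fun u _ => step1 u
      _ = n + 3 * ∑ u : V, ((Finset.Icc 1 n).filter
            (fun k => 3*k ≤ G.dist v u + 1)).card := by
          rw [Finset.sum_add_distrib, ← Finset.mul_sum]
          simp [hn]
      _ = n + 3 * ∑ k ∈ Finset.Icc 1 n,
            (Finset.univ.filter (fun u => 3*k ≤ G.dist v u + 1)).card := by
          congr 1
          congr 1
          simp only [Finset.card_filter]
          exact Finset.sum_comm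
  -- real constants
  set q : ℝ := (δ : ℝ) + 1 with hq
  set M : ℝ := (n : ℝ) - 1 - (Δ : ℝ) with hM
  have hq0 : (0:ℝ) < q := by rw [hq]; positivity
  have hq1 : (1:ℝ) ≤ q := by
    rw [hq]
    have : (0:ℝ) ≤ (δ:ℝ) := Nat.cast_nonneg _
    linarith
  have hqn : q ≤ (n:ℝ) := by rw [hq]; exact_mod_cast hδn
  have hM0 : (0:ℝ) ≤ M := by
    rw [hM]
    have : (Δ:ℝ) + 1 ≤ (n:ℝ) := by exact_mod_cast hΔn
    linarith
  have hMn : M ≤ (n:ℝ) - 1 := by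
    rw [hM]
    have : (0:ℝ) ≤ (Δ:ℝ) := Nat.cast_nonneg _
    linarith
  have hn2R : (2:ℝ) ≤ (n:ℝ) := by exact_mod_cast hn2
  have h2q : (0:ℝ) < 2*q := by linarith
  -- Step 3: bound on each B k
  have step3 : ∀ k ∈ Finset.Icc 1 n,
      ((Finset.univ.filter (fun u => 3*k ≤ G.dist v u + 1)).card : ℝ)
        ≤ max 0 (M - ((k:ℝ) - 1) * q) := by
    intro k hkmem
    rw [Finset.mem_Icc] at hkmem
    set B := (Finset.univ.filter (fun u => 3*k ≤ G.dist v u + 1)).card with hBdef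
    rcases Nat.eq_zero_or_pos B with hB0 | hBpos
    · rw [hB0]; simp
    · have hcount := prox_aux_count G hG v k hkmem.1 hBpos
      rw [hΔv, hδ, hn] at hcount
      refine le_trans ?_ (le_max_right _ _)
      rw [hM, hq]
      have hcast : ((k:ℝ) - 1) = ((k - 1 : ℕ) : ℝ) := by
        rw [Nat.cast_sub hkmem.1]; simp
      rw [hcast]
      have : (Δ:ℝ) + 1 + (B:ℝ) + ((k-1:ℕ):ℝ) * ((δ:ℝ) + 1) ≤ (n:ℝ) := by
        exact_mod_cast hcount
      linarith
  -- Step 4: telescoping bound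
  have step4 : ∑ k ∈ Finset.Icc 1 n, max 0 (M - ((k:ℝ) - 1) * q)
      ≤ (M + q/2)^2 / (2*q) := by
    have hre : ∑ k ∈ Finset.Icc 1 n, max 0 (M - ((k:ℝ) - 1) * q)
        = ∑ j ∈ Finset.range n, max 0 (M - (j:ℝ)*q) := by
      rw [← Finset.Ico_add_one_right_eq_Icc, Finset.sum_Ico_eq_sum_range]
      apply Finset.sum_congr (by congr 1)
      intro j _
      push_cast
      ring_nf
    rw [hre]
    exact prox_aux_tele M q hM0 hq0 n
  -- combine
  have total : (∑ u, (G.dist v u : ℝ)) ≤ (n:ℝ) + 3 * ((M + q/2)^2 / (2*q)) := by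
    have hc2 : (∑ u, (G.dist v u : ℝ))
        = ((∑ u, G.dist v u : ℕ) : ℝ) := by push_cast; rfl
    rw [hc2]
    calc ((∑ u, G.dist v u : ℕ) : ℝ)
        ≤ ((n + 3 * ∑ k ∈ Finset.Icc 1 n,
            (Finset.univ.filter (fun u => 3*k ≤ G.dist v u + 1)).card : ℕ) : ℝ) := by
          exact_mod_cast step2
      _ = (n:ℝ) + 3 * ∑ k ∈ Finset.Icc 1 n,
            ((Finset.univ.filter (fun u => 3*k ≤ G.dist v u + 1)).card : ℝ) := by
          push_cast; ring
      _ ≤ (n:ℝ) + 3 * ∑ k ∈ Finset.Icc 1 n, max 0 (M - ((k:ℝ) - 1) * q) := by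
          have := Finset.sum_le_sum step3
          linarith
      _ ≤ (n:ℝ) + 3 * ((M + q/2)^2 / (2*q)) := by linarith [step4]
  -- final arithmetic
  have hpos : (0:ℝ) < (n:ℝ) - 1 := by linarith
  refine le_trans hinf ?_
  rw [div_le_iff₀ hpos]
  have hΔM : (n:ℝ) - (Δ:ℝ) = M + 1 := by rw [hM]; ring
  have hP : 2*q*(n:ℝ) + 3*(M + q/2)^2 ≤ 3*(M+1)^2 + 13*q*((n:ℝ)-1) := by
    nlinarith [mul_nonneg hq0.le (sub_nonneg.mpr hMn),
      mul_nonneg hq0.le (by linarith : (0:ℝ) ≤ 2*((n:ℝ)-1) - q),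
      mul_nonneg hq0.le (by linarith : (0:ℝ) ≤ (n:ℝ) - 2)]
  have hne1 : ((n:ℝ) - 1) ≠ 0 := ne_of_gt hpos
  have hne2 : q ≠ 0 := ne_of_gt hq0
  have e1 : (3 * (M+1)^2 / (2*((n:ℝ)-1)*q) + 13/2) * ((n:ℝ)-1)
      = 3*(M+1)^2/(2*q) + 13*((n:ℝ)-1)/2 := by
    field_simp
  have l1 : (n:ℝ) + 3*((M + q/2)^2/(2*q)) = (2*q*(n:ℝ) + 3*(M+q/2)^2)/(2*q) := by
    field_simp
  have l2 : 3*(M+1)^2/(2*q) + 13*((n:ℝ)-1)/2 = (3*(M+1)^2 + 13*q*((n:ℝ)-1))/(2*q) := by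
    field_simp
  have hgoal : (n:ℝ) + 3 * ((M + q/2)^2 / (2*q))
      ≤ (3 * ((n:ℝ) - (Δ:ℝ)) ^ 2 / (2*((n:ℝ)-1)*q) + 13/2) * ((n:ℝ)-1) := by
    rw [hΔM, e1, l1, l2]
    rw [div_le_div_iff₀ h2q h2q]
    nlinarith [hP, h2q]
  exact le_trans total hgoal
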